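/- For all natural numbers n and c, the following identity of rational numbers holds: ∑_{k=1}^{n} (-1)^{k+1} (1/k) · C(n, c+k) = ∑_{k=1}^{n} (1/k) · C(n-k, c), where C(a,b) denotes the binomial coefficient with C(a,b) = 0 when b > a. -/

import Mathlib

open Finset

lemma alt_sum_q (n : ℕ) :
    ∑ i ∈ Finset.range (n + 1), (-1 : ℚ) ^ i * ((n + 1).choose (i + 1)) = 1 := by
  have h := Int.alternating_sum_range_choose (n := n + 1)
  simp only [Nat.succ_ne_zero, if_false] at h
  have h2 : ((∑ m ∈ Finset.range (n + 2), (-1 : ℤ) ^ m * ((n+1).choose m) : ℤ) : ℚ) = 0 := by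
    rw [h]; norm_num
  push_cast at h2
  rw [Finset.sum_range_succ'] at h2
  simp only [pow_zero, pow_succ, Nat.choose_zero_right] at h2
  have : ∑ i ∈ Finset.range (n + 1), (-1 : ℚ) ^ i * (-1) * ((n + 1).choose (i + 1)) + 1 = 0 := by
    convert h2 using 2 <;> (push_cast; ring)
  have hneg : ∑ i ∈ Finset.range (n + 1), (-1 : ℚ) ^ i * (-1) * ((n + 1).choose (i + 1))
      = -∑ i ∈ Finset.range (n + 1), (-1 : ℚ) ^ i * ((n + 1).choose (i + 1)) := by
    rw [← Finset.sum_neg_distrib]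
    exact Finset.sum_congr rfl fun i _ => by ring
  linarith [this, hneg]

lemma T0 (n : ℕ) :
    ∑ i ∈ Finset.range (n + 1), (-1 : ℚ) ^ i * (1 / (i + 1)) * (n.choose i)
      = 1 / (n + 1) := by
  have key : ∀ i : ℕ, (-1 : ℚ) ^ i * (1 / (i + 1)) * (n.choose i)
      = (1 / (n + 1)) * ((-1 : ℚ) ^ i * ((n + 1).choose (i + 1))) := by
    intro i
    have h := Nat.add_one_mul_choose_eq n i
    have h' : ((n : ℚ) + 1) * (n.choose i) = ((n + 1).choose (i + 1)) * ((i : ℚ) + 1) := by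
      exact_mod_cast congrArg (Nat.cast : ℕ → ℚ) h
    have hi : ((i : ℚ) + 1) ≠ 0 := by positivity
    have hn : ((n : ℚ) + 1) ≠ 0 := by positivity
    field_simp
    linear_combination h' 
  rw [Finset.sum_congr rfl (fun i _ => key i), ← Finset.mul_sum, alt_sum_q]
  ring

lemma euler_aux (n c : ℕ) :
    ∑ i ∈ Finset.range n, (-1 : ℚ) ^ i * (1 / (i + 1)) * (n.choose (c + i + 1)) =
      ∑ i ∈ Finset.range n, (1 / (i + 1) : ℚ) * ((n - (i + 1)).choose c) := by
  induction n generalizing c with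
  | zero => simp
  | succ n ih =>
    -- split LHS using Pascal
    have pascal : ∀ i : ℕ, ((n + 1).choose (c + i + 1) : ℚ)
        = (n.choose (c + i + 1) : ℚ) + (n.choose (c + i) : ℚ) := by
      intro i
      have := Nat.choose_succ_succ n (c + i)
      push_cast [this]
      ring
    have hsplit : ∑ i ∈ Finset.range (n + 1), (-1 : ℚ) ^ i * (1 / (i + 1)) * ((n+1).choose (c + i + 1))
        = (∑ i ∈ Finset.range (n + 1), (-1 : ℚ) ^ i * (1 / (i + 1)) * (n.choose (c + i + 1)))
          + ∑ i ∈ Finset.range (n + 1), (-1 : ℚ) ^ i * (1 / (i + 1)) * (n.choose (c + i)) := by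
      rw [← Finset.sum_add_distrib]
      refine Finset.sum_congr rfl fun i _ => ?_
      rw [pascal i]; ring
    have hfirst : ∑ i ∈ Finset.range (n + 1), (-1 : ℚ) ^ i * (1 / (i + 1)) * (n.choose (c + i + 1))
        = ∑ i ∈ Finset.range n, (-1 : ℚ) ^ i * (1 / (i + 1)) * (n.choose (c + i + 1)) := by
      rw [Finset.sum_range_succ]
      have : n.choose (c + n + 1) = 0 := Nat.choose_eq_zero_of_lt (by omega)
      simp [this]
    rw [hsplit, hfirst]
    cases c with
    | zero =>
      have ih0 := ih 0
      simp only [Nat.zero_add] at ih0 ⊢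
      rw [ih0, T0]
      rw [Finset.sum_range_succ]
      simp
    | succ d =>
      -- T = LHS(n,d) since top term vanishes
      have hT : ∑ i ∈ Finset.range (n + 1), (-1 : ℚ) ^ i * (1 / (i + 1)) * (n.choose (d + 1 + i))
          = ∑ i ∈ Finset.range n, (-1 : ℚ) ^ i * (1 / (i + 1)) * (n.choose (d + i + 1)) := by
        rw [Finset.sum_range_succ]
        have h0 : n.choose (d + 1 + n) = 0 := Nat.choose_eq_zero_of_lt (by omega)
        rw [h0]
        simp only [Nat.cast_zero, mul_zero, add_zero]
        exact Finset.sum_congr rfl fun i _ => by rw [show d + 1 + i = d + i + 1 by omega]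
      rw [hT, ih (d + 1), ih d]
      -- RHS(n+1,d+1) = RHS(n,d+1) + RHS(n,d)
      rw [Finset.sum_range_succ, ← Finset.sum_add_distrib]
      have h0 : ((n + 1 - (n + 1)).choose (d + 1) : ℚ) = 0 := by
        simp [Nat.choose_eq_zero_of_lt]
      rw [h0, mul_zero, add_zero]
      refine Finset.sum_congr rfl fun i hi => ?_
      have hi' : i < n := Finset.mem_range.mp hi
      have hstep : (n + 1 - (i + 1)).choose (d + 1)
          = (n - (i + 1)).choose (d + 1) + (n - (i + 1)).choose d := by
        have : n + 1 - (i + 1) = (n - (i + 1)) + 1 := by omega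
        rw [this, Nat.choose_succ_succ]; exact Nat.add_comm _ _
      rw [hstep]
      push_cast
      ring

theorem euler_log_identity (n c : ℕ) :
    ∑ k ∈ Finset.Icc 1 n, (-1 : ℚ) ^ (k + 1) * (1 / k) * (n.choose (c + k)) =
      ∑ k ∈ Finset.Icc 1 n, (1 / k : ℚ) * ((n - k).choose c) := by
  rw [← Finset.Ico_add_one_right_eq_Icc, Finset.sum_Ico_eq_sum_range, Finset.sum_Ico_eq_sum_range]
  simp only [Nat.add_sub_cancel, Nat.succ_sub_one]
  calc ∑ i ∈ Finset.range n, (-1 : ℚ) ^ (1 + i + 1) * (1 / (1 + i : ℕ)) * (n.choose (c + (1 + i)))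
      = ∑ i ∈ Finset.range n, (-1 : ℚ) ^ i * (1 / (i + 1)) * (n.choose (c + i + 1)) := by
        refine Finset.sum_congr rfl fun i _ => ?_
        have h1 : c + (1 + i) = c + i + 1 := by omega
        have h2 : (-1 : ℚ) ^ (1 + i + 1) = (-1 : ℚ) ^ i := by
          rw [show 1 + i + 1 = i + 2 by omega, pow_add]; norm_num
        rw [h1, h2]
        push_cast
        ring
    _ = ∑ i ∈ Finset.range n, (1 / (i + 1) : ℚ) * ((n - (i + 1)).choose c) := euler_aux n c
    _ = ∑ i ∈ Finset.range n, (1 / (1 + i : ℕ) : ℚ) * ((n - (1 + i)).choose c) := by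
        refine Finset.sum_congr rfl fun i _ => ?_
        have : n - (1 + i) = n - (i + 1) := by omega
        rw [this]
        push_cast
        ring
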